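/- Let D ⊆ 2^V be a distributive lattice (closed under union and intersection) with ∅, V ∈ D, and let H : D → ℝ be submodular. Let h be the Lovász extension of H, defined as h(x) = sup_{w ∈ B_D(H)} ⟨x, w⟩ where B_D(H) = { w : w(S) ≤ H(S) ∀S ∈ D, w(V) = H(V) }. Then the problems max_{w ∈ P_D(H)} −(1/2)‖w‖² and min_{x ∈ ℝ_+^V} h(x) + (1/2)‖x‖² have equal optimal values, where P_D(H) = { w : w(S) ≤ H(S) ∀S ∈ D }. Moreover, if w* is optimal for the first problem, then x* = −w* is optimal for the second, and vice versa. -/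

import Mathlib

open scoped BigOperators

section Aux

variable {V : Type*} [Fintype V] [DecidableEq V]

private lemma sum_expand' (a c : V → ℝ) (t : ℝ) :
    ∑ v, (a v + t * c v) ^ 2
      = ∑ v, (a v) ^ 2 + 2 * t * (∑ v, a v * c v) + t ^ 2 * ∑ v, (c v) ^ 2 := by
  have h : ∀ v ∈ Finset.univ, (a v + t * c v) ^ 2
      = (a v) ^ 2 + 2 * t * (a v * c v) + t ^ 2 * (c v) ^ 2 := fun v _ => by ring
  rw [Finset.sum_congr rfl h, Finset.sum_add_distrib, Finset.sum_add_distrib,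
    ← Finset.mul_sum, ← Finset.mul_sum]

private lemma exists_base_dominating (D : Set (Finset V)) (H : Finset V → ℝ)
    (hDV : Finset.univ ∈ D)
    (hDu : ∀ S T, S ∈ D → T ∈ D → S ∪ T ∈ D)
    (hDi : ∀ S T, S ∈ D → T ∈ D → S ∩ T ∈ D)
    (hsub : ∀ S T, S ∈ D → T ∈ D → H (S ∪ T) + H (S ∩ T) ≤ H S + H T)
    (hB0 : ∃ w : V → ℝ, (∀ S ∈ D, ∑ v ∈ S, w v ≤ H S) ∧ ∑ v, w v = H Finset.univ)
    (w : V → ℝ) (hw : ∀ S ∈ D, ∑ v ∈ S, w v ≤ H S) :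
    ∃ b : V → ℝ, ((∀ S ∈ D, ∑ v ∈ S, b v ≤ H S) ∧ ∑ v, b v = H Finset.univ)
      ∧ ∀ v, w v ≤ b v := by
  classical
  -- Step 1: saturate all coordinates
  have sat : ∀ A : Finset V, ∃ w' : V → ℝ,
      (∀ S ∈ D, ∑ v ∈ S, w' v ≤ H S) ∧ (∀ v, w v ≤ w' v) ∧
      (∀ v ∈ A, ∃ S ∈ D, v ∈ S ∧ ∑ u ∈ S, w' u = H S) := by
    intro A
    induction A using Finset.induction_on with
    | empty => exact ⟨w, hw, fun _ => le_rfl, by simp⟩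
    | insert v A hvA ih =>
      obtain ⟨w', hw'P, hw'ge, hw'tight⟩ := ih
      set DF : Finset (Finset V) := (Set.toFinite D).toFinset with hDF
      have hmemDF : ∀ S : Finset V, S ∈ DF ↔ S ∈ D := by
        intro S; exact Set.Finite.mem_toFinset _
      set F : Finset (Finset V) := DF.filter (fun S => v ∈ S) with hF
      have hFne : F.Nonempty := ⟨Finset.univ, by
        simp [hF, Finset.mem_filter, (hmemDF Finset.univ).2 hDV]⟩
      set α : ℝ := F.inf' hFne (fun S => H S - ∑ u ∈ S, w' u) with hα
      have hα_nonneg : 0 ≤ α := by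
        apply Finset.le_inf'
        intro S hS
        have hSD : S ∈ D := (hmemDF S).1 (Finset.mem_filter.1 hS).1
        have := hw'P S hSD
        linarith
      have hα_le : ∀ S ∈ D, v ∈ S → α ≤ H S - ∑ u ∈ S, w' u := by
        intro S hSD hvS
        exact Finset.inf'_le _ (Finset.mem_filter.2 ⟨(hmemDF S).2 hSD, hvS⟩)
      obtain ⟨S₀, hS₀F, hS₀eq⟩ := Finset.exists_mem_eq_inf' hFne (fun S => H S - ∑ u ∈ S, w' u)
      have hS₀D : S₀ ∈ D := (hmemDF S₀).1 (Finset.mem_filter.1 hS₀F).1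
      have hvS₀ : v ∈ S₀ := (Finset.mem_filter.1 hS₀F).2
      set w'' : V → ℝ := fun u => if u = v then w' u + α else w' u with hw''
      have hsum : ∀ S : Finset V, ∑ u ∈ S, w'' u
          = (∑ u ∈ S, w' u) + (if v ∈ S then α else 0) := by
        intro S
        by_cases hvS : v ∈ S
        · rw [← Finset.sum_erase_add _ _ hvS, ← Finset.sum_erase_add _ w' hvS]
          have h1 : ∑ u ∈ S.erase v, w'' u = ∑ u ∈ S.erase v, w' u := by
            apply Finset.sum_congr rfl
            intro u hu
            have : u ≠ v := Finset.ne_of_mem_erase hu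
            simp [hw'', this]
          rw [h1, if_pos hvS]; simp only [hw'', eq_self_iff_true, if_true]; ring
        · have h1 : ∑ u ∈ S, w'' u = ∑ u ∈ S, w' u := by
            apply Finset.sum_congr rfl
            intro u hu
            have : u ≠ v := by rintro rfl; exact hvS hu
            simp [hw'', this]
          simp [h1, hvS]
      refine ⟨w'', ?_, ?_, ?_⟩
      · intro S hSD
        rw [hsum S]
        by_cases hvS : v ∈ S
        · have := hα_le S hSD hvS
          simp only [hvS, if_true]; linarith
        · simp only [hvS, if_false]
          simpa using hw'P S hSD
      · intro u
        rcases eq_or_ne u v with rfl | hne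
        · simp only [hw'', if_pos rfl]
          have := hw'ge u; linarith
        · simp [hw'', hne, hw'ge u]
      · intro u hu
        rcases Finset.mem_insert.1 hu with rfl | huA
        · refine ⟨S₀, hS₀D, hvS₀, ?_⟩
          rw [hsum S₀]
          simp only [hvS₀, if_true]
          have : α = H S₀ - ∑ u ∈ S₀, w' u := hS₀eq
          linarith
        · obtain ⟨S, hSD, huS, hSt⟩ := hw'tight u huA
          refine ⟨S, hSD, huS, ?_⟩
          rw [hsum S]
          by_cases hvS : v ∈ S
          · have h1 := hα_le S hSD hvS
            have : α = 0 := le_antisymm (by rw [hSt] at h1; linarith) hα_nonneg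
            simp [this, hSt]
          · simp [hvS, hSt]
  obtain ⟨b, hbP, hbge, hbt⟩ := sat Finset.univ
  refine ⟨b, ⟨hbP, ?_⟩, hbge⟩
  -- Step 2: union of tight sets covering univ
  have tight_union : ∀ S T, S ∈ D → T ∈ D →
      (∑ u ∈ S, b u = H S) → (∑ u ∈ T, b u = H T) →
      (S ∪ T ∈ D ∧ ∑ u ∈ S ∪ T, b u = H (S ∪ T)) := by
    intro S T hS hT htS htT
    refine ⟨hDu S T hS hT, ?_⟩
    have h1 := hsub S T hS hT
    have h2 : ∑ u ∈ S ∪ T, b u + ∑ u ∈ S ∩ T, b u = ∑ u ∈ S, b u + ∑ u ∈ T, b u :=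
      Finset.sum_union_inter
    have h3 := hbP (S ∪ T) (hDu S T hS hT)
    have h4 := hbP (S ∩ T) (hDi S T hS hT)
    linarith
  have cover : ∀ A : Finset V, A.Nonempty →
      ∃ T ∈ D, A ⊆ T ∧ ∑ u ∈ T, b u = H T := by
    intro A
    induction A using Finset.induction_on with
    | empty => rintro ⟨x, hx⟩; exact absurd hx (Finset.notMem_empty x)
    | insert v A hvA ih =>
      intro _
      obtain ⟨Sv, hSvD, hvSv, hSvt⟩ := hbt v (Finset.mem_univ v)
      rcases A.eq_empty_or_nonempty with rfl | hAne
      · exact ⟨Sv, hSvD, by simpa using hvSv, hSvt⟩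
      · obtain ⟨T, hTD, hAT, hTt⟩ := ih hAne
        obtain ⟨hUD, hUt⟩ := tight_union Sv T hSvD hTD hSvt hTt
        refine ⟨Sv ∪ T, hUD, ?_, hUt⟩
        intro u hu
        rcases Finset.mem_insert.1 hu with rfl | huA
        · exact Finset.mem_union_left _ hvSv
        · exact Finset.mem_union_right _ (hAT huA)
  rcases (Finset.univ : Finset V).eq_empty_or_nonempty with huniv | huniv
  · obtain ⟨w0, _, hw0V⟩ := hB0
    rw [huniv] at hw0V ⊢
    simpa using hw0V
  · obtain ⟨T, hTD, hAT, hTt⟩ := cover Finset.univ huniv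
    have : T = Finset.univ := Finset.eq_univ_of_forall (fun x => hAT (Finset.mem_univ x))
    rwa [this] at hTt

private lemma exists_minnorm (D : Set (Finset V)) (H : Finset V → ℝ)
    (w0 : V → ℝ) (hw0 : ∀ S ∈ D, ∑ v ∈ S, w0 v ≤ H S) :
    ∃ w : V → ℝ, (∀ S ∈ D, ∑ v ∈ S, w v ≤ H S) ∧
      ∀ w' : V → ℝ, (∀ S ∈ D, ∑ v ∈ S, w' v ≤ H S) →
        ∑ v, (w v) ^ 2 ≤ ∑ v, (w' v) ^ 2 := by
  classical
  set P : Set (V → ℝ) := {w | ∀ S ∈ D, ∑ v ∈ S, w v ≤ H S} with hPdef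
  set f : (V → ℝ) → ℝ := fun w => ∑ v, (w v) ^ 2 with hf
  have hfc : Continuous f := by
    apply continuous_finset_sum
    intro v _
    exact (continuous_apply v).pow 2
  set C : ℝ := f w0 with hC
  set K : Set (V → ℝ) := P ∩ {w | f w ≤ C} with hK
  have hPclosed : IsClosed P := by
    have : P = ⋂ S ∈ D, {w : V → ℝ | ∑ v ∈ S, w v ≤ H S} := by
      ext w; simp [hPdef, Set.mem_iInter]
    rw [this]
    refine isClosed_biInter (fun S _ => ?_)
    exact isClosed_le (continuous_finset_sum _ (fun v _ => continuous_apply v)) continuous_const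
  have hKclosed : IsClosed K := hPclosed.inter (isClosed_le hfc continuous_const)
  have hKbdd : Bornology.IsBounded K := by
    have hsub : K ⊆ Metric.closedBall 0 (Real.sqrt C) := by
      intro w hw
      rw [Metric.mem_closedBall, dist_zero_right]
      rw [pi_norm_le_iff_of_nonneg (Real.sqrt_nonneg C)]
      intro v
      have h1 : (w v) ^ 2 ≤ C := by
        refine le_trans ?_ hw.2
        exact Finset.single_le_sum (fun u _ => sq_nonneg (w u)) (Finset.mem_univ v)
      have := Real.sqrt_le_sqrt h1
      rwa [Real.sqrt_sq_eq_abs] at this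
    exact Metric.isBounded_closedBall.subset hsub
  have hKcompact : IsCompact K := Metric.isCompact_of_isClosed_isBounded hKclosed hKbdd
  have hKne : K.Nonempty := ⟨w0, hw0, (le_rfl : f w0 ≤ C)⟩
  obtain ⟨w, hwK, hwmin⟩ := hKcompact.exists_isMinOn hKne hfc.continuousOn
  refine ⟨w, hwK.1, ?_⟩
  intro w' hw'
  by_cases hc : f w' ≤ C
  · exact hwmin ⟨hw', hc⟩
  · have h1 : f w ≤ C := hwK.2
    push_neg at hc
    linarith

private lemma ereal_cancel (e : EReal) (c r : ℝ) (he : e + (c : EReal) = (r : EReal)) :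
    e = ((r - c : ℝ) : EReal) := by
  induction e with
  | bot => simp at he
  | coe a =>
    rw [← EReal.coe_add] at he
    norm_cast at he ⊢
    linarith
  | top => simp at he

end Aux

/-- Duality between the minimum-norm-point problem `max_{w ∈ P_D(H)} −(1/2)‖w‖²`
and the regularized Lovász extension minimization `min_{x ≥ 0} h(x) + (1/2)‖x‖²`:
optimal values coincide, and `w*` is optimal for the first iff `x* = −w*` is
optimal for the second. -/
theorem minnorm_regularizedLovasz_duality {V : Type*} [Fintype V] [DecidableEq V]
    (D : Set (Finset V)) (hD0 : ∅ ∈ D) (hDV : Finset.univ ∈ D)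
    (hDu : ∀ S T, S ∈ D → T ∈ D → S ∪ T ∈ D)
    (hDi : ∀ S T, S ∈ D → T ∈ D → S ∩ T ∈ D)
    (H : Finset V → ℝ)
    (hsub : ∀ S T, S ∈ D → T ∈ D → H (S ∪ T) + H (S ∩ T) ≤ H S + H T)
    (hB : ∃ w : V → ℝ, (∀ S ∈ D, ∑ v ∈ S, w v ≤ H S) ∧ ∑ v, w v = H Finset.univ) :
    let P : Set (V → ℝ) := {w | ∀ S ∈ D, ∑ v ∈ S, w v ≤ H S}
    let B : Set (V → ℝ) :=
      {w | (∀ S ∈ D, ∑ v ∈ S, w v ≤ H S) ∧ ∑ v, w v = H Finset.univ}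
    let h : (V → ℝ) → EReal := fun x => ⨆ w ∈ B, ((∑ v, x v * w v : ℝ) : EReal)
    let obj : (V → ℝ) → EReal := fun x => h x + ((2⁻¹ * ∑ v, (x v) ^ 2 : ℝ) : EReal)
    (∀ w : V → ℝ,
      (w ∈ P ∧ ∀ w' ∈ P, -(2⁻¹ * ∑ v, (w' v) ^ 2) ≤ -(2⁻¹ * ∑ v, (w v) ^ 2)) →
      ((∀ v, 0 ≤ (-w) v) ∧ (∀ x : V → ℝ, (∀ v, 0 ≤ x v) → obj (-w) ≤ obj x)) ∧
      obj (-w) = ((-(2⁻¹ * ∑ v, (w v) ^ 2) : ℝ) : EReal)) ∧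
    (∀ x : V → ℝ,
      ((∀ v, 0 ≤ x v) ∧ (∀ x' : V → ℝ, (∀ v, 0 ≤ x' v) → obj x ≤ obj x')) →
      ((-x) ∈ P ∧ (∀ w' ∈ P, -(2⁻¹ * ∑ v, (w' v) ^ 2) ≤ -(2⁻¹ * ∑ v, ((-x) v) ^ 2))) ∧
      obj x = ((-(2⁻¹ * ∑ v, ((-x) v) ^ 2) : ℝ) : EReal)) := by
  classical
  intro P B h obj
  obtain ⟨w0, hw0P, hw0V⟩ := hB
  -- domination by a base vector
  have hdom : ∀ w ∈ P, ∃ b ∈ B, ∀ v, w v ≤ b v := by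
    intro w hwP
    obtain ⟨b, hb1, hb2⟩ :=
      exists_base_dominating D H hDV hDu hDi hsub ⟨w0, hw0P, hw0V⟩ w hwP
    exact ⟨b, hb1, hb2⟩
  -- members of B give lower bounds on h
  have hmem_le : ∀ (x : V → ℝ) (b : V → ℝ), b ∈ B →
      ((∑ v, x v * b v : ℝ) : EReal) ≤ h x := by
    intro x b hb
    exact le_iSup₂ (f := fun w (_ : w ∈ B) => ((∑ v, x v * w v : ℝ) : EReal)) b hb
  -- upper bounds on h
  have hub : ∀ (x : V → ℝ) (c : ℝ), (∀ b ∈ B, ∑ v, x v * b v ≤ c) →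
      h x ≤ (c : EReal) := by
    intro x c hc
    exact iSup₂_le fun b hb => EReal.coe_le_coe_iff.2 (hc b hb)
  -- lower bound on h from arbitrary members of P (via domination), for x ≥ 0
  have hPle : ∀ (x : V → ℝ), (∀ v, 0 ≤ x v) → ∀ w ∈ P,
      ((∑ v, x v * w v : ℝ) : EReal) ≤ h x := by
    intro x hx w hwP
    obtain ⟨b, hbB, hble⟩ := hdom w hwP
    refine le_trans ?_ (hmem_le x b hbB)
    exact_mod_cast Finset.sum_le_sum (fun v _ => mul_le_mul_of_nonneg_left (hble v) (hx v))
  -- weak duality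
  have hwd : ∀ (x : V → ℝ), (∀ v, 0 ≤ x v) → ∀ w ∈ P,
      ((-(2⁻¹ * ∑ v, (w v) ^ 2) : ℝ) : EReal) ≤ obj x := by
    intro x hx w hwP
    have h1 := hPle x hx w hwP
    have h2 : -(2⁻¹ * ∑ v, (w v) ^ 2) ≤ (∑ v, x v * w v) + 2⁻¹ * ∑ v, (x v) ^ 2 := by
      have e := sum_expand' x w 1
      have h0 : (0:ℝ) ≤ ∑ v, (x v + 1 * w v) ^ 2 :=
        Finset.sum_nonneg (fun v _ => sq_nonneg _)
      nlinarith
    calc ((-(2⁻¹ * ∑ v, (w v) ^ 2) : ℝ) : EReal)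
        ≤ (((∑ v, x v * w v) + 2⁻¹ * ∑ v, (x v) ^ 2 : ℝ) : EReal) :=
          EReal.coe_le_coe_iff.2 h2
      _ = ((∑ v, x v * w v : ℝ) : EReal) + ((2⁻¹ * ∑ v, (x v) ^ 2 : ℝ) : EReal) :=
          EReal.coe_add _ _
      _ ≤ h x + ((2⁻¹ * ∑ v, (x v) ^ 2 : ℝ) : EReal) := add_le_add_left h1 _
  -- Part 1
  have part1 : ∀ w : V → ℝ,
      (w ∈ P ∧ ∀ w' ∈ P, -(2⁻¹ * ∑ v, (w' v) ^ 2) ≤ -(2⁻¹ * ∑ v, (w v) ^ 2)) →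
      ((∀ v, 0 ≤ (-w) v) ∧ (∀ x : V → ℝ, (∀ v, 0 ≤ x v) → obj (-w) ≤ obj x)) ∧
        obj (-w) = ((-(2⁻¹ * ∑ v, (w v) ^ 2) : ℝ) : EReal) := by
    rintro w ⟨hwP, hwopt⟩
    have hwopt' : ∀ w' ∈ P, ∑ v, (w v) ^ 2 ≤ ∑ v, (w' v) ^ 2 := by
      intro w' hw'; have := hwopt w' hw'; linarith
    -- (i) w ≤ 0
    have hneg : ∀ v, 0 ≤ (-w) v := by
      intro v
      by_contra hcon
      push_neg at hcon
      have hpos : 0 < w v := by simpa using hcon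
      set w' : V → ℝ := Function.update w v 0 with hw'
      have hle : ∀ u, w' u ≤ w u := by
        intro u; rcases eq_or_ne u v with rfl | hne
        · simp [hw', hpos.le]
        · simp [hw', hne]
      have hw'P : w' ∈ P := fun S hS =>
        le_trans (Finset.sum_le_sum (fun u _ => hle u)) (hwP S hS)
      have h1 := hwopt' w' hw'P
      have e1 : ∑ u, (w u) ^ 2 = (∑ u ∈ Finset.univ.erase v, (w u) ^ 2) + (w v) ^ 2 :=
        (Finset.sum_erase_add _ _ (Finset.mem_univ v)).symm
      have e2 : ∑ u, (w' u) ^ 2 = (∑ u ∈ Finset.univ.erase v, (w u) ^ 2) + 0 := by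
        rw [← Finset.sum_erase_add _ _ (Finset.mem_univ v)]
        congr 1
        · exact Finset.sum_congr rfl (fun u hu => by
            simp [hw', Finset.ne_of_mem_erase hu])
        · simp [hw']
      have hsq : 0 < (w v) ^ 2 := pow_pos hpos 2
      linarith
    -- (ii) variational inequality
    have hvi : ∀ b ∈ P, ∑ v, (w v) ^ 2 ≤ ∑ v, w v * b v := by
      intro b hbP
      set c : ℝ := (∑ v, w v * b v) - ∑ v, (w v) ^ 2 with hc
      set d : ℝ := ∑ v, (b v - w v) ^ 2 with hd
      have hd0 : 0 ≤ d := Finset.sum_nonneg (fun v _ => sq_nonneg _)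
      have key : ∀ t : ℝ, 0 ≤ t → t ≤ 1 → 0 ≤ 2 * t * c + t ^ 2 * d := by
        intro t ht0 ht1
        set z : V → ℝ := fun v => w v + t * (b v - w v) with hz
        have hzP : z ∈ P := by
          intro S hS
          have e : ∑ v ∈ S, z v = (1 - t) * ∑ v ∈ S, w v + t * ∑ v ∈ S, b v := by
            rw [Finset.mul_sum, Finset.mul_sum, ← Finset.sum_add_distrib]
            exact Finset.sum_congr rfl (fun v _ => by simp [hz]; ring)
          rw [e]
          nlinarith [hwP S hS, hbP S hS]
        have h1 := hwopt' z hzP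
        have e := sum_expand' w (fun v => b v - w v) t
        have eip : ∑ v, w v * (b v - w v) = ∑ v, w v * b v - ∑ v, (w v) ^ 2 := by
          rw [← Finset.sum_sub_distrib]
          exact Finset.sum_congr rfl (fun v _ => by ring)
        have ez : ∑ v, (z v) ^ 2 = ∑ v, (w v + t * (b v - w v)) ^ 2 := rfl
        rw [ez, e, eip] at h1
        simp only [hc, hd]
        linarith
      by_contra hlt
      push_neg at hlt
      have hc0 : c < 0 := by simp only [hc]; linarith
      rcases eq_or_lt_of_le hd0 with hdeq | hdpos
      · have := key 1 zero_le_one le_rfl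
        nlinarith
      · have ht0 : 0 < min 1 (-c / d) :=
          lt_min one_pos (div_pos (neg_pos.2 hc0) hdpos)
        have ht1 : min 1 (-c / d) ≤ 1 := min_le_left _ _
        have htd : min 1 (-c / d) ≤ -c / d := min_le_right _ _
        have := key (min 1 (-c / d)) ht0.le ht1
        have h2 : min 1 (-c / d) * d ≤ -c := (le_div_iff₀ hdpos).1 htd
        nlinarith
    -- (iii) h (-w) = -(∑ w²)
    have e3 : ∑ v, (-w) v * w v = -(∑ v, (w v) ^ 2) := by
      rw [← Finset.sum_neg_distrib]
      exact Finset.sum_congr rfl (fun v _ => by simp only [Pi.neg_apply]; ring)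
    have hsup : h (-w) = ((-(∑ v, (w v) ^ 2) : ℝ) : EReal) := by
      apply le_antisymm
      · apply hub
        intro b hb
        have h1 := hvi b hb.1
        have e4 : ∑ v, (-w) v * b v = -(∑ v, w v * b v) := by
          rw [← Finset.sum_neg_distrib]
          exact Finset.sum_congr rfl (fun v _ => by simp only [Pi.neg_apply]; ring)
        rw [e4]
        linarith
      · have h1 := hPle (-w) hneg w hwP
        rwa [e3] at h1
    have esq : ∑ v, ((-w) v) ^ 2 = ∑ v, (w v) ^ 2 :=
      Finset.sum_congr rfl (fun v _ => by simp only [Pi.neg_apply]; ring)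
    have hobj : obj (-w) = ((-(2⁻¹ * ∑ v, (w v) ^ 2) : ℝ) : EReal) := by
      show h (-w) + ((2⁻¹ * ∑ v, ((-w) v) ^ 2 : ℝ) : EReal)
          = ((-(2⁻¹ * ∑ v, (w v) ^ 2) : ℝ) : EReal)
      rw [hsup, esq, ← EReal.coe_add, EReal.coe_eq_coe_iff]
      ring
    refine ⟨⟨hneg, ?_⟩, hobj⟩
    intro x hx
    rw [hobj]
    exact hwd x hx w hwP
  refine ⟨part1, ?_⟩
  -- Part 2
  rintro x ⟨hx0, hxopt⟩
  obtain ⟨ws, hwsP, hwsmin⟩ := exists_minnorm D H w0 hw0P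
  have hwsopt : ws ∈ P ∧ ∀ w' ∈ P,
      -(2⁻¹ * ∑ v, (w' v) ^ 2) ≤ -(2⁻¹ * ∑ v, (ws v) ^ 2) :=
    ⟨hwsP, fun w' hw' => by have := hwsmin w' hw'; linarith⟩
  obtain ⟨⟨hwsneg, hwsobjopt⟩, hwsobj⟩ := part1 ws hwsopt
  set W : ℝ := ∑ v, (ws v) ^ 2 with hW
  set X : ℝ := ∑ v, (x v) ^ 2 with hX
  set IP : ℝ := ∑ v, x v * ws v with hIP
  -- obj x equals the optimal value
  have hxval : obj x = ((-(2⁻¹ * W) : ℝ) : EReal) := by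
    refine le_antisymm ?_ ?_
    · rw [← hwsobj]; exact hxopt (-ws) hwsneg
    · rw [← hwsobj]; exact hwsobjopt x hx0
  -- extract real value of h x
  have hhx : h x = ((-(2⁻¹ * W) - 2⁻¹ * X : ℝ) : EReal) := by
    apply ereal_cancel
    exact hxval
  -- extract real value of h (-ws)
  have esqw : ∑ v, ((-ws) v) ^ 2 = W :=
    Finset.sum_congr rfl (fun v _ => by simp only [Pi.neg_apply]; ring)
  have hhws : h (-ws) = ((-(2⁻¹ * W) - 2⁻¹ * W : ℝ) : EReal) := by
    have h1 : h (-ws) + ((2⁻¹ * W : ℝ) : EReal) = ((-(2⁻¹ * W) : ℝ) : EReal) := by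
      conv_lhs => rw [show (2⁻¹ * W : ℝ) = 2⁻¹ * ∑ v, ((-ws) v) ^ 2 from by rw [esqw]]
      exact hwsobj
    exact ereal_cancel _ _ _ h1
  -- upper bounds on inner products with base vectors
  have hxb : ∀ b ∈ B, ∑ v, x v * b v ≤ -(2⁻¹ * W) - 2⁻¹ * X := by
    intro b hb
    have h1 := hmem_le x b hb
    rw [hhx] at h1
    exact_mod_cast h1
  have hwb : ∀ b ∈ B, ∑ v, (-ws) v * b v ≤ -(2⁻¹ * W) - 2⁻¹ * W := by
    intro b hb
    have h1 := hmem_le (-ws) b hb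
    rw [hhws] at h1
    exact_mod_cast h1
  -- the midpoint
  set m : V → ℝ := fun v => (x v + (-ws) v) / 2 with hm
  have hm0 : ∀ v, 0 ≤ m v := by
    intro v
    have h1 := hx0 v
    have h2 := hwsneg v
    simp only [hm]
    linarith
  set cm : ℝ := 2⁻¹ * ((-(2⁻¹ * W) - 2⁻¹ * X) + (-(2⁻¹ * W) - 2⁻¹ * W)) with hcm
  have hmub : h m ≤ ((cm : ℝ) : EReal) := by
    apply hub
    intro b hb
    have h1 := hxb b hb
    have h2 := hwb b hb
    have e : ∑ v, m v * b v
        = 2⁻¹ * (∑ v, x v * b v) + 2⁻¹ * (∑ v, (-ws) v * b v) := by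
      rw [Finset.mul_sum, Finset.mul_sum, ← Finset.sum_add_distrib]
      exact Finset.sum_congr rfl (fun v _ => by simp only [hm, Pi.neg_apply]; ring)
    rw [e, hcm]
    linarith
  have hobjm_le : obj m ≤ ((cm + 2⁻¹ * ∑ v, (m v) ^ 2 : ℝ) : EReal) := by
    show h m + ((2⁻¹ * ∑ v, (m v) ^ 2 : ℝ) : EReal) ≤ _
    calc h m + ((2⁻¹ * ∑ v, (m v) ^ 2 : ℝ) : EReal)
        ≤ ((cm : ℝ) : EReal) + ((2⁻¹ * ∑ v, (m v) ^ 2 : ℝ) : EReal) :=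
          add_le_add_left hmub _
      _ = ((cm + 2⁻¹ * ∑ v, (m v) ^ 2 : ℝ) : EReal) := (EReal.coe_add _ _).symm
  have hlb : obj x ≤ obj m := hxopt m hm0
  rw [hxval] at hlb
  have hreal : -(2⁻¹ * W) ≤ cm + 2⁻¹ * ∑ v, (m v) ^ 2 := by
    have := le_trans hlb hobjm_le
    exact_mod_cast this
  -- expansions
  have eM : ∑ v, (m v) ^ 2 = (X - 2 * IP + W) / 4 := by
    have hc : ∀ v ∈ Finset.univ, (m v) ^ 2
        = ((x v) ^ 2 - 2 * (x v * ws v) + (ws v) ^ 2) / 4 := fun v _ => by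
      simp only [hm, Pi.neg_apply]; ring
    rw [Finset.sum_congr rfl hc, ← Finset.sum_div]
    congr 1
    rw [Finset.sum_add_distrib, Finset.sum_sub_distrib, ← Finset.mul_sum]
  have eS : ∑ v, (x v + ws v) ^ 2 = X + 2 * IP + W := by
    have hc : ∀ v ∈ Finset.univ, (x v + ws v) ^ 2
        = (x v) ^ 2 + 2 * (x v * ws v) + (ws v) ^ 2 := fun v _ => by ring
    rw [Finset.sum_congr rfl hc, Finset.sum_add_distrib, Finset.sum_add_distrib,
      ← Finset.mul_sum]
  have hsum0 : ∑ v, (x v + ws v) ^ 2 ≤ 0 := by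
    rw [eS]
    rw [eM] at hreal
    simp only [hcm] at hreal
    linarith
  have hzero : ∀ v, x v + ws v = 0 := by
    intro v
    have hnn : ∀ u ∈ Finset.univ, (0:ℝ) ≤ (x u + ws u) ^ 2 := fun u _ => sq_nonneg _
    have hge := Finset.sum_nonneg hnn
    have heq : ∑ v, (x v + ws v) ^ 2 = 0 := le_antisymm hsum0 hge
    have := (Finset.sum_eq_zero_iff_of_nonneg hnn).1 heq v (Finset.mem_univ v)
    exact pow_eq_zero_iff two_ne_zero |>.1 this
  have hxw : x = -ws := funext (fun v => by
    have := hzero v; simp only [Pi.neg_apply]; linarith)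
  have hnx : -x = ws := by rw [hxw, neg_neg]
  refine ⟨⟨?_, ?_⟩, ?_⟩
  · rw [hnx]; exact hwsP
  · intro w' hw'
    rw [hnx]
    exact hwsopt.2 w' hw'
  · have esq2 : ∑ v, ((-x) v) ^ 2 = W := by rw [hnx]
    rw [esq2, hxw]
    exact hwsobj
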